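/- arXiv:2209.08481 — 2 statements merged into one kernel-verified Lean document; each statement's English description precedes it below -/
import Mathlib

section
/- There exists an entire function g which belongs to the Hörmander–Fock space H but not to the Fock space F(ℂ); hence the inclusion F(ℂ) ⊆ H is strict. -/
open MeasureTheory

lemma key_eq (z : ℂ) : ‖Complex.exp (z ^ 2 / 2)‖ ^ 2 * Real.exp (-‖z‖ ^ 2)
    = Real.exp (-2 * z.im ^ 2) := by
  rw [Complex.norm_exp, ← Real.exp_nat_mul, ← Real.exp_add]
  congr 1
  have h1 : (z ^ 2 / 2).re = (z.re ^ 2 - z.im ^ 2) / 2 := by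
    simp [Complex.div_re, Complex.sq_norm, Complex.normSq_apply, pow_two, Complex.mul_re,
      Complex.mul_im]
  have h2 : ‖z‖ ^ 2 = z.re ^ 2 + z.im ^ 2 := by
    rw [Complex.sq_norm, Complex.normSq_apply]; ring
  rw [h1, h2]; ring

lemma norm_sq_eq (z : ℂ) : ‖z‖ ^ 2 = z.re ^ 2 + z.im ^ 2 := by
  rw [Complex.sq_norm, Complex.normSq_apply]; ring

theorem stmt_4 :
    ∃ g : ℂ → ℂ, Differentiable ℂ g ∧
      Integrable (fun z : ℂ => ‖g z‖ ^ 2 / (1 + ‖z‖ ^ 2) ^ 2 * Real.exp (-‖z‖ ^ 2)) ∧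
      ¬ Integrable (fun z : ℂ => ‖g z‖ ^ 2 * Real.exp (-‖z‖ ^ 2)) := by
  refine ⟨fun z => Complex.exp (z ^ 2 / 2), (Complex.differentiable_exp.comp
    (((differentiable_id.pow 2).div_const 2))), ?_, ?_⟩
  · -- integrable part
    have hB : Integrable (fun z : ℂ => (1 + z.re ^ 2)⁻¹ * (1 + z.im ^ 2)⁻¹) := by
      have h := (integrable_inv_one_add_sq.mul_prod integrable_inv_one_add_sq)
      have := (Complex.volume_preserving_equiv_real_prod.integrable_comp_emb
        (Complex.measurableEquivRealProd.measurableEmbedding)).2 h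
      exact this
    refine hB.mono ?_ ?_
    · apply Continuous.aestronglyMeasurable
      apply Continuous.mul
      · apply Continuous.div (by fun_prop) (by fun_prop)
        intro z
        positivity
      · fun_prop
    · filter_upwards with z
      have hx := sq_nonneg z.re
      have hy := sq_nonneg z.im
      have heq : ‖Complex.exp (z ^ 2 / 2)‖ ^ 2 / (1 + ‖z‖ ^ 2) ^ 2 * Real.exp (-‖z‖ ^ 2)
          = Real.exp (-2 * z.im ^ 2) / (1 + ‖z‖ ^ 2) ^ 2 := by
        rw [div_mul_eq_mul_div, key_eq]
      rw [Real.norm_eq_abs, Real.norm_eq_abs, abs_of_nonneg (by positivity),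
        abs_of_nonneg (by positivity), heq, norm_sq_eq]
      have h1 : Real.exp (-2 * z.im ^ 2) ≤ 1 := Real.exp_le_one_iff.2 (by nlinarith)
      have h2 : (1 + z.re ^ 2) * (1 + z.im ^ 2) ≤ (1 + (z.re ^ 2 + z.im ^ 2)) ^ 2 := by
        nlinarith [sq_nonneg (z.re * z.im)]
      have h3 : Real.exp (-2 * z.im ^ 2) / (1 + (z.re ^ 2 + z.im ^ 2)) ^ 2
          ≤ 1 / ((1 + z.re ^ 2) * (1 + z.im ^ 2)) :=
        div_le_div₀ zero_le_one h1 (by positivity) h2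
      rwa [one_div, mul_inv] at h3
  · -- non-integrable part
    intro h
    have h' : Integrable (fun z : ℂ => Real.exp (-2 * z.im ^ 2)) := by
      refine h.congr ?_
      filter_upwards with z using (key_eq z)
    have hprod : Integrable (fun p : ℝ × ℝ => Real.exp (-2 * p.2 ^ 2))
        ((volume : Measure ℝ).prod volume) := by
      have h'' : Integrable ((fun p : ℝ × ℝ => Real.exp (-2 * p.2 ^ 2)) ∘
          Complex.measurableEquivRealProd) volume := by
        exact h'
      have := (Complex.volume_preserving_equiv_real_prod.integrable_comp_emb
        (Complex.measurableEquivRealProd.measurableEmbedding)).1 h''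
      simpa [Measure.volume_eq_prod] using this
    have := hprod.prod_left_ae
    rw [Filter.eventually_iff_exists_mem] at this
    obtain ⟨s, hs, hy⟩ := this
    obtain ⟨y, hys⟩ : s.Nonempty := by
      by_contra hne
      rw [Set.not_nonempty_iff_eq_empty] at hne
      subst hne
      simp at hs
    have hcy : Integrable (fun _ : ℝ => Real.exp (-2 * y ^ 2)) volume := hy y hys
    rw [integrable_const_iff] at hcy
    rcases hcy with hc | hc
    · exact (Real.exp_pos _).ne' hc
    · simpa using hc.measure_univ_lt_top.ne
end

section
/- Let p be a subharmonic function on ℂ satisfying: p ≥ 0; log(1+|z|²) = O(p(z)); and there exist constants C, D > 0 such that |z − w| ≤ 1 implies p(z) ≤ C p(w) + D. Then an entire function f : ℂ → ℂ satisfies (∃ A, B > 0 such that |f(z)| ≤ A exp(B p(z)) for all z ∈ ℂ) if and only if (∃ C > 0 such that ∫_ℂ |f(z)|²/(1+|z|²)² e^{-C p(z)} dλ(z) < ∞). That is, A_p(ℂ) = 𝔥_p(ℂ) as sets. -/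
open MeasureTheory

/-- `p` is subharmonic on `Ω`: upper semicontinuous and satisfying the
sub-mean-value inequality on every closed disc contained in `Ω`. -/
def SubharmonicOn (p : ℂ → ℝ) (Ω : Set ℂ) : Prop :=
  UpperSemicontinuousOn p Ω ∧
  ∀ z₀ : ℂ, ∀ r : ℝ, 0 < r → Metric.closedBall z₀ r ⊆ Ω →
    p z₀ ≤ (1 / (2 * Real.pi)) *
      ∫ θ in (0:ℝ)..(2 * Real.pi), p (z₀ + r * Complex.exp (θ * Complex.I))

open Real Complex Metric Set in
lemma circle_mvp (g : ℂ → ℂ) (hg : Differentiable ℂ g) (c : ℂ) (r : ℝ) (hr : 0 < r) :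
    (∫ θ in (0:ℝ)..(2*Real.pi), g (circleMap c r θ)) = (2*Real.pi : ℂ) * g c := by
  have h := (hg.differentiableOn (s := Metric.closedBall c r)).circleIntegral_sub_inv_smul
      (Metric.mem_ball_self hr)
  rw [circleIntegral] at h
  have h2 : ∀ θ : ℝ, deriv (circleMap c r) θ • ((circleMap c r θ - c)⁻¹ • g (circleMap c r θ))
      = Complex.I * g (circleMap c r θ) := by
    intro θ
    rw [deriv_circleMap, circleMap_sub_center, smul_eq_mul, smul_eq_mul]
    have hne : circleMap 0 r θ ≠ 0 := by
      simpa using circleMap_ne_center (c := (0:ℂ)) (R := r) hr.ne' (θ := θ)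
    field_simp
  simp_rw [h2] at h
  rw [intervalIntegral.integral_const_mul] at h
  apply mul_left_cancel₀ Complex.I_ne_zero
  rw [h, smul_eq_mul]
  ring

open Real in
lemma circle_sq_le (f : ℂ → ℂ) (hf : Differentiable ℂ f) (c : ℂ) (r : ℝ) (hr : 0 < r) :
    2*π*‖f c‖^2 ≤ ∫ θ in (0:ℝ)..(2*π), ‖f (circleMap c r θ)‖^2 := by
  have h := circle_mvp (fun z => (f z)^2) (by fun_prop) c r hr
  have : 2*π*‖f c‖^2 = ‖∫ θ in (0:ℝ)..(2*π), (f (circleMap c r θ))^2‖ := by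
    rw [h]
    rw [norm_mul, ← norm_pow]
    simp [Real.pi_nonneg, abs_of_nonneg, mul_nonneg]
  rw [this]
  have := intervalIntegral.norm_integral_le_integral_norm
    (f := fun θ => (f (circleMap c r θ))^2) (a := 0) (b := 2*π) (μ := volume) (by positivity)
  simpa [norm_pow] using this

open Real Metric Set in
lemma area_mvp (f : ℂ → ℂ) (hf : Differentiable ℂ f) (c : ℂ) :
    π * ‖f c‖^2 ≤ ∫ z in Metric.ball c 1, ‖f z‖^2 := by
  set F : ℂ → ℝ := fun z => ‖f (c + z)‖^2 with hF
  set g : ℂ → ℝ := Set.indicator (ball (0:ℂ) 1) F with hg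
  set H : ℝ × ℝ → ℝ := fun p => p.1 * ‖f (c + (p.1 * (Real.cos p.2 + Real.sin p.2 * Complex.I)))‖^2 with hH
  have hHcont : Continuous H := by rw [hH]; have := hf.continuous; fun_prop
  have hHint : IntegrableOn H (Set.Ioo (0:ℝ) 1 ×ˢ Set.Ioo (-π) π) := by
    apply (hHcont.continuousOn.integrableOn_compact (isCompact_Icc.prod isCompact_Icc)).mono_set
    exact Set.prod_mono Set.Ioo_subset_Icc_self Set.Ioo_subset_Icc_self
  -- step 1 : translation
  have step1 : ∫ z in ball c 1, ‖f z‖^2 = ∫ z, g z := by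
    rw [hg, MeasureTheory.integral_indicator measurableSet_ball]
    have := MeasureTheory.integral_add_left_eq_self
      (μ := volume) (Set.indicator (ball c 1) (fun w => ‖f w‖^2)) c
    rw [← MeasureTheory.integral_indicator (μ := volume) (measurableSet_ball (x := c) (ε := 1)), ← this]
    rw [← MeasureTheory.integral_indicator measurableSet_ball]
    congr 1
    funext z
    by_cases hz : z ∈ ball (0:ℂ) 1
    · have hz' : c + z ∈ ball c 1 := by
        simpa [Metric.mem_ball, dist_eq_norm] using hz
      simp [Set.indicator_of_mem hz, Set.indicator_of_mem hz', hF]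
    · have hz' : c + z ∉ ball c 1 := by
        simpa [Metric.mem_ball, dist_eq_norm] using hz
      simp [Set.indicator_of_notMem hz, Set.indicator_of_notMem hz']
  -- step 2 : polar coordinates
  have step2 : ∫ z, g z = ∫ p in polarCoord.target, p.1 • g (Complex.polarCoord.symm p) :=
    (Complex.integral_comp_polarCoord_symm g).symm
  -- step 3 : rewrite as indicator
  have step3 : ∫ p in polarCoord.target, p.1 • g (Complex.polarCoord.symm p)
      = ∫ p in Set.Ioo (0:ℝ) 1 ×ˢ Set.Ioo (-π) π, H p := by
    have heq : ∀ p ∈ polarCoord.target,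
        p.1 • g (Complex.polarCoord.symm p)
          = Set.indicator (Set.Ioo (0:ℝ) 1 ×ˢ Set.Ioo (-π) π) H p := by
      rintro ⟨r, θ⟩ hp
      rw [polarCoord_target] at hp
      obtain ⟨hr, hθ⟩ := hp
      have habs : ‖Complex.polarCoord.symm (r, θ)‖ = r := by
        rw [Complex.norm_polarCoord_symm]; exact abs_of_pos hr
      by_cases h1 : r < 1
      · have hmem : Complex.polarCoord.symm (r, θ) ∈ ball (0:ℂ) 1 := by
          rw [Metric.mem_ball, dist_zero_right, habs]; exact h1
        have hmem2 : (r, θ) ∈ Set.Ioo (0:ℝ) 1 ×ˢ Set.Ioo (-π) π := ⟨⟨hr, h1⟩, hθ⟩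
        rw [hg, Set.indicator_of_mem hmem, Set.indicator_of_mem hmem2]
        simp only [hF, hH, smul_eq_mul, Complex.polarCoord_symm_apply]
      · have hmem : Complex.polarCoord.symm (r, θ) ∉ ball (0:ℂ) 1 := by
          rw [Metric.mem_ball, dist_zero_right, habs]
          simpa using h1
        have hmem2 : (r, θ) ∉ Set.Ioo (0:ℝ) 1 ×ˢ Set.Ioo (-π) π := by
          simp only [Set.mem_prod, Set.mem_Ioo, not_and_or]
          left; right; simpa using h1
        rw [hg, Set.indicator_of_notMem hmem, Set.indicator_of_notMem hmem2, smul_zero]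
    rw [MeasureTheory.setIntegral_congr_fun (polarCoord.open_target.measurableSet) heq,
      MeasureTheory.setIntegral_indicator
        ((measurableSet_Ioo.prod measurableSet_Ioo))]
    rw [polarCoord_target,
      Set.inter_eq_self_of_subset_right (Set.prod_mono Set.Ioo_subset_Ioi_self subset_rfl)]
  -- step 5 : Fubini
  have step5 : ∫ p in Set.Ioo (0:ℝ) 1 ×ˢ Set.Ioo (-π) π, H p
      = ∫ r in Set.Ioo (0:ℝ) 1, ∫ θ in Set.Ioo (-π) π, H (r, θ) := by
    rw [MeasureTheory.Measure.volume_eq_prod] at hHint ⊢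
    exact MeasureTheory.setIntegral_prod H hHint
  -- step 6 : inner integral
  have step6 : ∀ r ∈ Set.Ioo (0:ℝ) 1,
      ∫ θ in Set.Ioo (-π) π, H (r, θ)
        = r * ∫ θ in (0:ℝ)..(2*π), ‖f (circleMap c r θ)‖^2 := by
    intro r hr
    have hcm : ∀ θ : ℝ, H (r, θ) = r * ‖f (circleMap c r θ)‖^2 := by
      intro θ
      simp only [hH, circleMap, Complex.exp_mul_I]
      norm_num
    simp_rw [hcm]
    rw [MeasureTheory.integral_const_mul]
    congr 1
    rw [← MeasureTheory.integral_Ioc_eq_integral_Ioo,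
      ← intervalIntegral.integral_of_le (by linarith [Real.pi_pos] : -π ≤ π)]
    have hper : Function.Periodic (fun θ => ‖f (circleMap c r θ)‖^2) (2*π) :=
      fun θ => by simp only []; rw [periodic_circleMap]
    have := hper.intervalIntegral_add_eq (-π) 0
    simpa [show -π + 2*π = π by ring] using this
  -- step 7 : outer bound
  have step7 : π * ‖f c‖^2 ≤ ∫ r in Set.Ioo (0:ℝ) 1, ∫ θ in Set.Ioo (-π) π, H (r, θ) := by
    have hint2 : IntegrableOn (fun r => ∫ θ in Set.Ioo (-π) π, H (r, θ)) (Set.Ioo (0:ℝ) 1) := by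
      have h' : Integrable H ((volume.restrict (Set.Ioo (0:ℝ) 1)).prod
          (volume.restrict (Set.Ioo (-π) π))) := by
        rw [MeasureTheory.Measure.prod_restrict, ← MeasureTheory.Measure.volume_eq_prod]
        exact hHint
      exact h'.integral_prod_left
    have hmono : ∀ r ∈ Set.Ioo (0:ℝ) 1,
        (2*π*‖f c‖^2) * r ≤ ∫ θ in Set.Ioo (-π) π, H (r, θ) := by
      intro r hr
      rw [step6 r hr, mul_comm]
      exact mul_le_mul_of_nonneg_left (circle_sq_le f hf c r hr.1) hr.1.le
    have hint1 : IntegrableOn (fun r => (2*π*‖f c‖^2) * r) (Set.Ioo (0:ℝ) 1) := by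
      apply ((continuous_const.mul continuous_id).continuousOn.integrableOn_compact
        isCompact_Icc).mono_set Set.Ioo_subset_Icc_self
    have hlow : ∫ r in Set.Ioo (0:ℝ) 1, (2*π*‖f c‖^2) * r = π * ‖f c‖^2 := by
      rw [MeasureTheory.integral_const_mul]
      have : ∫ r in Set.Ioo (0:ℝ) 1, r = 1/2 := by
        rw [← MeasureTheory.integral_Ioc_eq_integral_Ioo,
          ← intervalIntegral.integral_of_le zero_le_one]
        simp
      rw [this]; ring
    calc π * ‖f c‖^2 = ∫ r in Set.Ioo (0:ℝ) 1, (2*π*‖f c‖^2) * r := hlow.symm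
      _ ≤ _ := MeasureTheory.setIntegral_mono_on hint1 hint2 measurableSet_Ioo hmono
  linarith [step1 ▸ step2 ▸ step3 ▸ step5 ▸ step7]

set_option maxHeartbeats 1000000 in
theorem stmt_6 (p : ℂ → ℝ) (hsub : SubharmonicOn p Set.univ)
    (hp0 : ∀ z : ℂ, 0 ≤ p z)
    (hlog : ∃ M > 0, ∀ z : ℂ, Real.log (1 + ‖z‖ ^ 2) ≤ M * p z)
    (hloc : ∃ C > 0, ∃ D > 0, ∀ z w : ℂ, ‖z - w‖ ≤ 1 → p z ≤ C * p w + D)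
    (f : ℂ → ℂ) (hf : Differentiable ℂ f) :
    (∃ A > 0, ∃ B > 0, ∀ z : ℂ, ‖f z‖ ≤ A * Real.exp (B * p z)) ↔
    (∃ C > 0,
      Integrable (fun z : ℂ => ‖f z‖ ^ 2 / (1 + ‖z‖ ^ 2) ^ 2 * Real.exp (-(C * p z)))) := by
  obtain ⟨M, hM, hlogM⟩ := hlog
  obtain ⟨C₁, hC₁, D₁, hD₁, hlocCD⟩ := hloc
  have hpmeas : Measurable p :=
    ((upperSemicontinuousOn_univ_iff).mp hsub.1).measurable
  constructor
  · rintro ⟨A, hA, B, hB, hbound⟩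
    refine ⟨2*B, by positivity, ?_⟩
    have hmeas : AEStronglyMeasurable
        (fun z : ℂ => ‖f z‖ ^ 2 / (1 + ‖z‖ ^ 2) ^ 2 * Real.exp (-(2*B * p z))) volume := by
      apply AEStronglyMeasurable.mul
      · exact ((hf.continuous.norm.pow 2).div
          ((continuous_const.add (continuous_norm.pow 2)).pow 2)
          (fun z => (by positivity : (1 + ‖z‖ ^ 2) ^ 2 ≠ 0))).aestronglyMeasurable
      · exact (Real.measurable_exp.comp ((measurable_const.mul hpmeas).neg)).aestronglyMeasurable
    apply Integrable.mono' (g := fun z : ℂ => (A^2*4) * (1+‖z‖)^(-(4:ℝ)))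
    · exact (integrable_one_add_norm
        (by norm_num [Complex.finrank_real_complex])).const_mul _
    · exact hmeas
    · filter_upwards with z
      rw [Real.norm_eq_abs, abs_of_nonneg (by positivity)]
      have h1 : ‖f z‖^2 ≤ A^2 * Real.exp (2*B*p z) := by
        have h2 : (Real.exp (B * p z))^2 = Real.exp (2*B*p z) := by
          rw [sq, ← Real.exp_add]; ring_nf
        calc ‖f z‖^2 ≤ (A * Real.exp (B * p z))^2 :=
              pow_le_pow_left₀ (norm_nonneg _) (hbound z) 2
          _ = A^2 * Real.exp (2*B*p z) := by rw [mul_pow, h2]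
      have hrpow : (1+‖z‖)^(-(4:ℝ)) = ((1+‖z‖)^(4:ℕ))⁻¹ := by
        rw [Real.rpow_neg (by positivity), ← Real.rpow_natCast]; norm_num
      calc ‖f z‖ ^ 2 / (1 + ‖z‖ ^ 2) ^ 2 * Real.exp (-(2*B * p z))
          ≤ (A^2 * Real.exp (2*B*p z)) / (1 + ‖z‖ ^ 2) ^ 2 * Real.exp (-(2*B * p z)) := by
            gcongr
        _ = A^2 * (Real.exp (2*B*p z) * Real.exp (-(2*B*p z))) / (1 + ‖z‖ ^ 2) ^ 2 := by
            ring
        _ = A^2 / (1 + ‖z‖ ^ 2) ^ 2 := by rw [← Real.exp_add]; simp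
        _ ≤ (A^2*4) * (1+‖z‖)^(-(4:ℝ)) := by
            rw [hrpow, ← div_eq_mul_inv, div_le_div_iff₀ (by positivity) (by positivity)]
            have ha : (1+‖z‖)^2 ≤ 2*(1+‖z‖^2) := by nlinarith [sq_nonneg (‖z‖-1)]
            have hb : (1+‖z‖)^4 ≤ 4*(1+‖z‖^2)^2 := by
              calc (1+‖z‖)^4 = ((1+‖z‖)^2)^2 := by ring
                _ ≤ (2*(1+‖z‖^2))^2 := pow_le_pow_left₀ (by positivity) ha 2
                _ = 4*(1+‖z‖^2)^2 := by ring
            nlinarith [hb, sq_nonneg A]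
  · rintro ⟨C, hC, hint⟩
    set G : ℂ → ℝ := fun z => ‖f z‖ ^ 2 / (1 + ‖z‖ ^ 2) ^ 2 * Real.exp (-(C * p z)) with hG
    set I : ℝ := ∫ z, G z with hI
    have hI0 : 0 ≤ I := integral_nonneg (fun z => by positivity)
    set K : ℝ := 2*M + C with hK
    have hKpos : 0 < K := by positivity
    refine ⟨Real.sqrt (I * Real.exp (K*D₁) / Real.pi) + 1,
      by positivity, K*C₁/2, by positivity, ?_⟩
    intro c
    have key : ∀ z ∈ Metric.ball c 1,
        ‖f z‖^2 ≤ Real.exp (K*(C₁*p c + D₁)) * G z := by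
      intro z hz
      have hpz : p z ≤ C₁ * p c + D₁ := by
        apply hlocCD z c
        rw [← dist_eq_norm]
        exact (Metric.mem_ball.mp hz).le
      have h2 : (1+‖z‖^2)^2 ≤ Real.exp (2*M*p z) := by
        have hl : Real.log (1+‖z‖^2) ≤ M * p z := hlogM z
        have h0 : (0:ℝ) < 1+‖z‖^2 := by positivity
        calc (1+‖z‖^2)^2 = Real.exp (Real.log (1+‖z‖^2))^2 := by rw [Real.exp_log h0]
          _ ≤ Real.exp (M*p z)^2 :=
              pow_le_pow_left₀ (Real.exp_nonneg _) (Real.exp_le_exp.mpr hl) 2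
          _ = Real.exp (2*M*p z) := by rw [sq, ← Real.exp_add, show M*p z + M*p z = 2*M*p z from by ring]
      have h3 : (1+‖z‖^2)^2 * Real.exp (C*p z) ≤ Real.exp (K*(C₁*p c + D₁)) := by
        calc (1+‖z‖^2)^2 * Real.exp (C*p z)
            ≤ Real.exp (2*M*p z) * Real.exp (C*p z) := by
              gcongr
          _ = Real.exp (K * p z) := by rw [← Real.exp_add, show 2*M*p z + C*p z = K*p z from by rw [hK]; ring]
          _ ≤ Real.exp (K*(C₁*p c + D₁)) :=
              Real.exp_le_exp.mpr (mul_le_mul_of_nonneg_left hpz hKpos.le)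
      have h4 : (1+‖z‖^2)^2 ≤ Real.exp (K*(C₁*p c + D₁)) * Real.exp (-(C*p z)) := by
        have h5 := mul_le_mul_of_nonneg_right h3 (Real.exp_nonneg (-(C*p z)))
        calc (1+‖z‖^2)^2
            = (1+‖z‖^2)^2 * (Real.exp (C*p z) * Real.exp (-(C*p z))) := by
              rw [← Real.exp_add]; simp
          _ ≤ _ := by rw [← mul_assoc]; exact h5
      have hd : (0:ℝ) < (1+‖z‖^2)^2 := by positivity
      rw [hG]
      rw [show Real.exp (K*(C₁*p c + D₁)) * (‖f z‖ ^ 2 / (1 + ‖z‖ ^ 2) ^ 2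
          * Real.exp (-(C * p z)))
        = (‖f z‖^2 * (Real.exp (K*(C₁*p c + D₁)) * Real.exp (-(C*p z)))) / (1+‖z‖^2)^2 by
          ring]
      rw [le_div_iff₀ hd]
      exact mul_le_mul_of_nonneg_left h4 (by positivity)
    have hIntf : IntegrableOn (fun z => ‖f z‖^2) (Metric.ball c 1) := by
      apply ((hf.continuous.norm.pow 2).continuousOn.integrableOn_compact
        (isCompact_closedBall c 1)).mono_set Metric.ball_subset_closedBall
    have hIntG : IntegrableOn (fun z => Real.exp (K*(C₁*p c + D₁)) * G z)
        (Metric.ball c 1) := (hint.const_mul _).integrableOn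
    have hball : Real.pi * ‖f c‖^2 ≤ Real.exp (K*(C₁*p c + D₁)) * I := by
      have h1 := area_mvp f hf c
      have h2 : ∫ z in Metric.ball c 1, ‖f z‖^2
          ≤ ∫ z in Metric.ball c 1, Real.exp (K*(C₁*p c + D₁)) * G z :=
        setIntegral_mono_on hIntf hIntG measurableSet_ball key
      rw [MeasureTheory.integral_const_mul] at h2
      have h4 : ∫ z in Metric.ball c 1, G z ≤ I :=
        setIntegral_le_integral hint (Filter.Eventually.of_forall fun z => by positivity)
      have h5 := mul_le_mul_of_nonneg_left h4 (Real.exp_nonneg (K*(C₁*p c + D₁)))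
      linarith
    have h5 : ‖f c‖^2 ≤ (I * Real.exp (K*D₁) / Real.pi) * Real.exp (K*C₁*p c) := by
      rw [← le_div_iff₀' Real.pi_pos] at hball
      have he : Real.exp (K*(C₁*p c + D₁)) = Real.exp (K*D₁) * Real.exp (K*C₁*p c) := by
        rw [← Real.exp_add, show K*D₁ + K*C₁*p c = K*(C₁*p c + D₁) from by ring]
      calc ‖f c‖^2 ≤ Real.exp (K*(C₁*p c + D₁)) * I / Real.pi := hball
        _ = (I * Real.exp (K*D₁) / Real.pi) * Real.exp (K*C₁*p c) := by rw [he]; ring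
    have h6 : ‖f c‖ ≤ Real.sqrt (I * Real.exp (K*D₁) / Real.pi) * Real.exp (K*C₁/2 * p c) := by
      have h7 : ‖f c‖ = Real.sqrt (‖f c‖^2) := (Real.sqrt_sq (norm_nonneg _)).symm
      rw [h7]
      calc Real.sqrt (‖f c‖^2)
          ≤ Real.sqrt ((I * Real.exp (K*D₁) / Real.pi) * Real.exp (K*C₁*p c)) :=
            Real.sqrt_le_sqrt h5
        _ = Real.sqrt (I * Real.exp (K*D₁) / Real.pi) * Real.sqrt (Real.exp (K*C₁*p c)) :=
            Real.sqrt_mul (by positivity) _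
        _ = Real.sqrt (I * Real.exp (K*D₁) / Real.pi) * Real.exp (K*C₁/2 * p c) := by
            rw [show K*C₁/2 * p c = (K*C₁*p c)/2 by ring, Real.exp_half]
    calc ‖f c‖ ≤ Real.sqrt (I * Real.exp (K*D₁) / Real.pi) * Real.exp (K*C₁/2 * p c) := h6
      _ ≤ (Real.sqrt (I * Real.exp (K*D₁) / Real.pi) + 1) * Real.exp (K*C₁/2 * p c) := by
          gcongr
          linarith [Real.sq_sqrt hI0]
end
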